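/- For every L > 0 there exists a unique real number x satisfying h(x − L) = h(x) − L·h′(x) (geometrically: the tangent line to the graph of h at (x, h(x)) passes through the point (x − L, h(x − L))), and this unique solution lies in the open interval (0, L). -/

import Mathlib

/-- The hill function `h(x) = arccos(tanh x)`. -/
noncomputable def hill (x : ℝ) : ℝ := Real.arccos (Real.tanh x)

/-- The derivative of the hill function: `h'(x) = -1/cosh x`. -/
noncomputable def hill' (x : ℝ) : ℝ := -1 / Real.cosh x

open Real

lemma tanh_lt_one' (x : ℝ) : |Real.tanh x| < 1 := by
  rw [Real.tanh_eq_sinh_div_cosh, abs_div, abs_of_pos (Real.cosh_pos x),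
    div_lt_one (Real.cosh_pos x)]
  have h := Real.cosh_sq_sub_sinh_sq x
  nlinarith [abs_nonneg (Real.sinh x), sq_abs (Real.sinh x), Real.cosh_pos x,
    abs_nonneg (Real.sinh x)]

lemma sqrt_one_sub_tanh_sq (x : ℝ) : Real.sqrt (1 - Real.tanh x ^ 2) = 1 / Real.cosh x := by
  have hc := Real.cosh_pos x
  have h : 1 - Real.tanh x ^ 2 = (1 / Real.cosh x) ^ 2 := by
    rw [Real.tanh_eq_sinh_div_cosh]
    have := Real.cosh_sq_sub_sinh_sq x
    field_simp
    linarith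
  rw [h, Real.sqrt_sq (by positivity)]


lemma hasDerivAt_tanh' (x : ℝ) : HasDerivAt Real.tanh (1 / Real.cosh x ^ 2) x := by
  have hc := Real.cosh_pos x
  have h := (Real.hasDerivAt_sinh x).div (Real.hasDerivAt_cosh x) hc.ne'
  have he : Real.tanh = Real.sinh / Real.cosh := by
    funext y; exact Real.tanh_eq_sinh_div_cosh y
  rw [← he] at h
  refine h.congr_deriv ?_
  have := Real.cosh_sq_sub_sinh_sq x
  field_simp
  nlinarith

lemma hill_hasDerivAt (x : ℝ) : HasDerivAt hill (hill' x) x := by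
  have hb := tanh_lt_one' x
  rw [abs_lt] at hb
  have h := (Real.hasDerivAt_arccos (by linarith [hb.1] : Real.tanh x ≠ -1)
    (by linarith [hb.2] : Real.tanh x ≠ 1)).comp x (hasDerivAt_tanh' x)
  have hc := Real.cosh_pos x
  refine h.congr_deriv ?_
  rw [sqrt_one_sub_tanh_sq, hill']
  field_simp

lemma hill_cont : Continuous hill :=
  continuous_iff_continuousAt.2 fun x => (hill_hasDerivAt x).continuousAt

lemma hill_neg (x : ℝ) : hill (-x) = π - hill x := by
  rw [hill, hill, Real.tanh_neg, Real.arccos_neg]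

lemma hill_zero : hill 0 = π / 2 := by
  rw [hill, Real.tanh_zero, Real.arccos_zero]

/-- `p t = π/2 - hill t - t / cosh t` is positive for `t > 0`. -/
lemma p_pos {t : ℝ} (ht : 0 < t) : 0 < π / 2 - hill t - t / Real.cosh t := by
  set p : ℝ → ℝ := fun t => π / 2 - hill t - t / Real.cosh t with hp
  have hder : ∀ s : ℝ, HasDerivAt p (s * Real.sinh s / Real.cosh s ^ 2) s := by
    intro s
    have hc := Real.cosh_pos s
    have h1 : HasDerivAt (fun s : ℝ => π / 2 - hill s) (-(hill' s)) s :=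
      (hill_hasDerivAt s).const_sub _
    have h2 : HasDerivAt (fun s : ℝ => s / Real.cosh s)
        ((1 * Real.cosh s - s * Real.sinh s) / Real.cosh s ^ 2) s :=
      (hasDerivAt_id s).div (Real.hasDerivAt_cosh s) hc.ne'
    have := h1.sub h2
    refine this.congr_deriv ?_
    rw [hill']
    field_simp
    ring
  have hmono : StrictMonoOn p (Set.Ici (0 : ℝ)) := by
    apply strictMonoOn_of_deriv_pos (convex_Ici 0)
      (Continuous.continuousOn (by
        have : Continuous p := continuous_iff_continuousAt.2 fun s => (hder s).continuousAt
        exact this))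
    intro s hs
    rw [interior_Ici] at hs
    rw [(hder s).deriv]
    have hc := Real.cosh_pos s
    have hsinh : 0 < Real.sinh s := by
      rw [← Real.sinh_zero]; exact Real.sinh_lt_sinh.2 hs
    exact div_pos (mul_pos hs hsinh) (by positivity)
  have h0 : p 0 = 0 := by simp [hp, hill_zero]
  have := hmono (Set.self_mem_Ici) (Set.mem_Ici.2 ht.le) ht
  rw [h0] at this
  exact this

/-- `π/2 - hill t < t` for `t > 0`. -/
lemma q_pos {t : ℝ} (ht : 0 < t) : π / 2 - hill t < t := by
  set q : ℝ → ℝ := fun t => t - π / 2 + hill t with hq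
  have hder : ∀ s : ℝ, HasDerivAt q (1 + hill' s) s := by
    intro s
    have := ((hasDerivAt_id s).sub_const (π / 2)).add (hill_hasDerivAt s)
    exact this
  have hmono : StrictMonoOn q (Set.Ici (0 : ℝ)) := by
    apply strictMonoOn_of_deriv_pos (convex_Ici 0)
      (Continuous.continuousOn
        (continuous_iff_continuousAt.2 fun s => (hder s).continuousAt))
    intro s hs
    rw [interior_Ici] at hs
    rw [(hder s).deriv, hill']
    have hc : 1 < Real.cosh s := Real.one_lt_cosh.2 (ne_of_gt hs)
    have : -1 / Real.cosh s > -1 := by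
      rw [gt_iff_lt, neg_div, neg_lt_neg_iff, div_lt_one (by linarith)]
      exact hc
    linarith
  have h0 : q 0 = 0 := by simp [hq, hill_zero]
  have := hmono (Set.self_mem_Ici) (Set.mem_Ici.2 ht.le) ht
  rw [h0] at this
  simp only [hq] at this
  linarith

/-- For every `L > 0` there is a unique real `x` such that the tangent line to the
graph of the hill function at `(x, h x)` passes through `(x - L, h (x - L))`, i.e.
`h (x - L) = h x - L * h' x`; moreover this solution lies in `(0, L)`. -/
theorem hill_tangent_chord_existsUnique {L : ℝ} (hL : 0 < L) :
    ∃ x : ℝ, (hill (x - L) = hill x - L * hill' x) ∧ x ∈ Set.Ioo 0 L ∧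
      ∀ y : ℝ, hill (y - L) = hill y - L * hill' y → y = x := by
  set G : ℝ → ℝ := fun x => hill (x - L) - hill x - L / Real.cosh x with hGdef
  -- derivative of G
  have hGder : ∀ x : ℝ, HasDerivAt G
      (-1 / Real.cosh (x - L) + 1 / Real.cosh x + L * Real.sinh x / Real.cosh x ^ 2) x := by
    intro x
    have hc := Real.cosh_pos x
    have h1 : HasDerivAt (fun x : ℝ => hill (x - L)) (hill' (x - L) * 1) x :=
      (hill_hasDerivAt (x - L)).comp (h₂ := hill) x ((hasDerivAt_id x).sub_const L)
    have h2 : HasDerivAt (fun x : ℝ => L / Real.cosh x)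
        ((0 * Real.cosh x - L * Real.sinh x) / Real.cosh x ^ 2) x :=
      (hasDerivAt_const x L).div (Real.hasDerivAt_cosh x) hc.ne'
    have := (h1.sub (hill_hasDerivAt x)).sub h2
    refine this.congr_deriv ?_
    rw [hill', hill']
    field_simp
    ring
  have hGcont : Continuous G :=
    continuous_iff_continuousAt.2 fun x => (hGder x).continuousAt
  -- equation is equivalent to G = 0
  have hiff : ∀ y : ℝ, hill (y - L) = hill y - L * hill' y ↔ G y = 0 := by
    intro y
    rw [hGdef]
    simp only [hill']
    constructor <;> intro h
    · rw [h]; field_simp; ring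
    · have hc := Real.cosh_pos y
      field_simp at h ⊢
      linarith
  -- every zero of G lies in (0, L/2)
  have hzero_mem : ∀ x : ℝ, G x = 0 → x ∈ Set.Ioo 0 (L / 2) := by
    intro x hx
    have hxL : x - L < x := by linarith
    obtain ⟨c, hc, hceq⟩ := exists_hasDerivAt_eq_slope hill hill' hxL
      hill_cont.continuousOn (fun y _ => hill_hasDerivAt y)
    -- from G x = 0, slope equals hill' x
    have hslope : (hill x - hill (x - L)) / (x - (x - L)) = hill' x := by
      have hxsub : x - (x - L) = L := by ring
      have hx' : hill (x - L) - hill x - L / Real.cosh x = 0 := hx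
      have hc' := Real.cosh_pos x
      have key : hill x - hill (x - L) = -(L / Real.cosh x) := by linarith
      rw [hxsub, key, hill']
      field_simp
    rw [hslope] at hceq
    -- hill' c = hill' x implies cosh c = cosh x implies c = ±x
    have hcosh : Real.cosh c = Real.cosh x := by
      rw [hill', hill'] at hceq
      have h1 := Real.cosh_pos c
      have h2 := Real.cosh_pos x
      field_simp at hceq
      linarith
    have habs : |c| = |x| := by
      by_contra h
      rcases lt_or_gt_of_ne h with h' | h'
      · exact absurd hcosh (ne_of_lt (Real.cosh_lt_cosh.2 h'))
      · exact absurd hcosh.symm (ne_of_lt (Real.cosh_lt_cosh.2 h'))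
    have hcx : c = -x := by
      rcases abs_eq_abs.1 habs with h | h
      · exact absurd h (ne_of_lt hc.2)
      · exact h
    rw [hcx] at hc
    constructor
    · linarith [hc.2]
    · linarith [hc.1]
  -- G is strictly monotone on [0, L/2]
  have hmono : StrictMonoOn G (Set.Icc 0 (L / 2)) := by
    apply strictMonoOn_of_deriv_pos (convex_Icc _ _) hGcont.continuousOn
    intro x hx
    rw [interior_Icc] at hx
    rw [(hGder x).deriv]
    have hx0 : 0 < x := hx.1
    have hxL2 : x < L / 2 := hx.2
    have h1 : Real.cosh x < Real.cosh (x - L) := by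
      rw [Real.cosh_lt_cosh]
      rw [abs_of_pos hx0, abs_of_neg (by linarith : x - L < 0)]
      linarith
    have hc1 := Real.cosh_pos x
    have hc2 := Real.cosh_pos (x - L)
    have hterm : -1 / Real.cosh (x - L) + 1 / Real.cosh x > 0 := by
      rw [neg_div]
      have : 1 / Real.cosh (x - L) < 1 / Real.cosh x :=
        one_div_lt_one_div_of_lt hc1 h1
      linarith
    have hsinh : 0 < Real.sinh x := by
      rw [← Real.sinh_zero]; exact Real.sinh_lt_sinh.2 hx0
    have : 0 < L * Real.sinh x / Real.cosh x ^ 2 := by positivity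
    linarith
  -- G 0 < 0 < G L
  have hG0 : G 0 < 0 := by
    have : G 0 = (π / 2 - hill L) - L := by
      simp only [hGdef, zero_sub, hill_neg, hill_zero, Real.cosh_zero]
      ring
    rw [this]
    linarith [q_pos hL]
  have hGL : 0 < G L := by
    have : G L = π / 2 - hill L - L / Real.cosh L := by
      simp only [hGdef, sub_self, hill_zero]
    rw [this]
    exact p_pos hL
  -- existence via IVT
  have hivt := intermediate_value_Ioo hL.le hGcont.continuousOn
  have h0mem : (0 : ℝ) ∈ Set.Ioo (G 0) (G L) := ⟨hG0, hGL⟩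
  obtain ⟨x, hxmem, hxeq⟩ := hivt h0mem
  refine ⟨x, (hiff x).2 hxeq, hxmem, ?_⟩
  intro y hy
  have hyz : G y = 0 := (hiff y).1 hy
  have hy2 := hzero_mem y hyz
  have hx2 := hzero_mem x hxeq
  have : G y = G x := by rw [hyz, hxeq]
  exact hmono.injOn (Set.mem_Icc_of_Ioo hy2) (Set.mem_Icc_of_Ioo hx2) this
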